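/- The t-preconditioned Crank–Nicolson (tpCN) proposal transition kernel is reversible with respect to the multivariate t-distribution t_ν(μ_s, C_s): if p_s denotes the density of t_ν(μ_s, C_s) and κ_t(x, x') the tpCN proposal density, then p_s(x)κ_t(x, x') = p_s(x')κ_t(x', x) for all x, x' ∈ ℝ^d. -/

import Mathlib

open Matrix Real MeasureTheory

/-- Multivariate Gaussian density with mean `m` and covariance `S` on `ℝ^d`. -/
noncomputable def gaussPdf (d : ℕ) (m : Fin d → ℝ) (S : Matrix (Fin d) (Fin d) ℝ)
    (x : Fin d → ℝ) : ℝ :=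
  (Real.sqrt ((2 * Real.pi) ^ d * S.det))⁻¹ *
    Real.exp (-(1 / 2) * ((x - m) ⬝ᵥ (S⁻¹ *ᵥ (x - m))))

/-- The inner product `⟨x₁, x₂⟩_s = (x₁ − μ_s)ᵀ C_s⁻¹ (x₂ − μ_s)`. -/
noncomputable def innerS (d : ℕ) (μs : Fin d → ℝ) (Cs : Matrix (Fin d) (Fin d) ℝ)
    (x₁ x₂ : Fin d → ℝ) : ℝ :=
  (x₁ - μs) ⬝ᵥ (Cs⁻¹ *ᵥ (x₂ - μs))

/-- Density of `Z` when `Z⁻¹ ∼ Gamma(shape k, scale θ)`. -/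
noncomputable def invGammaPdf (k θ z : ℝ) : ℝ :=
  if 0 < z then z ^ (-(k + 1)) * Real.exp (-1 / (θ * z)) / (Real.Gamma k * θ ^ k) else 0

/-- The tpCN proposal density from `x` to `x'`: a scale mixture of Gaussians, the
proposal being `x' = μ_s + √(1−ρ²)(x−μ_s) + ρ√Z W` with
`Z⁻¹ ∼ Gamma((d+ν)/2, 2/(ν+⟨x,x⟩_s))` and `W ∼ N(0, C_s)`. -/
noncomputable def tpcnPdf (d : ℕ) (ν : ℝ) (μs : Fin d → ℝ)
    (Cs : Matrix (Fin d) (Fin d) ℝ) (ρ : ℝ) (x x' : Fin d → ℝ) : ℝ :=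
  ∫ z in Set.Ioi (0 : ℝ),
    gaussPdf d (μs + Real.sqrt (1 - ρ ^ 2) • (x - μs)) ((ρ ^ 2 * z) • Cs) x' *
      invGammaPdf (((d : ℝ) + ν) / 2) (2 / (ν + innerS d μs Cs x x)) z

/-- The multivariate `t` density `t_ν(μ_s, C_s)`. -/
noncomputable def tPdf (d : ℕ) (ν : ℝ) (μs : Fin d → ℝ)
    (Cs : Matrix (Fin d) (Fin d) ℝ) (x : Fin d → ℝ) : ℝ :=
  Real.Gamma ((ν + d) / 2) /
      (Real.Gamma (ν / 2) * (ν * Real.pi) ^ ((d : ℝ) / 2) * Real.sqrt Cs.det) *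
    (1 + innerS d μs Cs x x / ν) ^ (-((ν + d) / 2))

/- ## Auxiliary lemmas -/

/-- The inverse-gamma-type integral, by the substitution `z ↦ z⁻¹`. -/
lemma integral_inv_pow_exp {c b : ℝ} (hc : 0 < c) (hb : 0 < b) :
    ∫ z in Set.Ioi (0 : ℝ), z ^ (-c - 1) * Real.exp (-(b / z)) = b ^ (-c) * Real.Gamma c := by
  have h := Real.integral_rpow_mul_exp_neg_mul_Ioi hc hb
  have hsub := MeasureTheory.integral_comp_rpow_Ioi
      (fun z : ℝ => z ^ (-c - 1) * Real.exp (-(b / z))) (p := -1) (by norm_num)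
  rw [← hsub]
  have hptw : ∀ t ∈ Set.Ioi (0 : ℝ),
      (|(-1 : ℝ)| * t ^ ((-1 : ℝ) - 1)) •
          ((t ^ (-1 : ℝ)) ^ (-c - 1) * Real.exp (-(b / t ^ (-1 : ℝ))))
        = t ^ (c - 1) * Real.exp (-(b * t)) := by
    intro t ht
    have ht0 : (0 : ℝ) < t := ht
    rw [Real.rpow_neg_one, Real.inv_rpow ht0.le, ← Real.rpow_neg ht0.le, div_inv_eq_mul,
      smul_eq_mul, abs_neg, abs_one, one_mul, ← mul_assoc, ← Real.rpow_add ht0,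
      show (-1 : ℝ) - 1 + -(-c - 1) = c - 1 by ring]
  rw [MeasureTheory.setIntegral_congr_fun measurableSet_Ioi hptw, h, one_div,
    Real.inv_rpow hb.le, ← Real.rpow_neg hb.le]

/-- Symmetry of the bilinear form attached to a symmetric matrix. -/
lemma dot_symm {d : ℕ} {M : Matrix (Fin d) (Fin d) ℝ} (hM : Mᵀ = M) (u v : Fin d → ℝ) :
    u ⬝ᵥ (M *ᵥ v) = v ⬝ᵥ (M *ᵥ u) := by
  rw [Matrix.dotProduct_mulVec, ← Matrix.mulVec_transpose, hM, dotProduct_comm]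

lemma inv_transpose_eq {d : ℕ} {Cs : Matrix (Fin d) (Fin d) ℝ} (hCs : Cs.PosDef) :
    (Cs⁻¹)ᵀ = Cs⁻¹ := by
  have h : (Cs⁻¹)ᴴ = Cs⁻¹ := hCs.inv.isHermitian
  ext i j
  have h2 : (Cs⁻¹)ᴴ i j = Cs⁻¹ i j := by rw [h]
  simpa [Matrix.conjTranspose_apply, Matrix.transpose_apply] using h2

lemma cancel_aux {ν a kk : ℝ} (hν : 0 < ν) (ha : 0 ≤ a) :
    (1 + a / ν) ^ (-kk) * ((ν + a) / 2) ^ kk = (ν / 2) ^ kk := by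
  have hνa : 0 < ν + a := by linarith
  have h1 : 1 + a / ν = (ν + a) / ν := by field_simp
  rw [h1, Real.rpow_neg (by positivity), ← Real.inv_rpow (by positivity), inv_div,
    ← Real.mul_rpow (by positivity) (by positivity)]
  congr 1
  field_simp

set_option maxHeartbeats 2000000 in
/-- Closed form of the tpCN proposal density. -/
lemma tpcn_eval (d : ℕ) (ν : ℝ) (hν : 0 < ν) (μs : Fin d → ℝ)
    (Cs : Matrix (Fin d) (Fin d) ℝ) (hCs : Cs.PosDef) (ρ : ℝ)
    (hρ : ρ ∈ Set.Ioo (0 : ℝ) 1) (x x' : Fin d → ℝ) :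
    tpcnPdf d ν μs Cs ρ x x' =
      (Real.sqrt ((2 * Real.pi) ^ d * Cs.det) * ρ ^ d)⁻¹ *
        (Real.Gamma ((d : ℝ) / 2 + ((d : ℝ) + ν) / 2) / Real.Gamma (((d : ℝ) + ν) / 2)) *
        (((ν + innerS d μs Cs x x) / 2) ^ (((d : ℝ) + ν) / 2) *
          ((ν + (innerS d μs Cs x x + innerS d μs Cs x' x'
              - 2 * Real.sqrt (1 - ρ ^ 2) * innerS d μs Cs x x') / ρ ^ 2) / 2)
            ^ (-((d : ℝ) / 2 + ((d : ℝ) + ν) / 2))) := by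
  obtain ⟨hρ0, hρ1⟩ := hρ
  have hMt : (Cs⁻¹)ᵀ = Cs⁻¹ := inv_transpose_eq hCs
  unfold tpcnPdf
  simp only [innerS]
  set s : ℝ := Real.sqrt (1 - ρ ^ 2) with hs_def
  have hs2 : s ^ 2 = 1 - ρ ^ 2 := Real.sq_sqrt (by nlinarith)
  set u : Fin d → ℝ := x - μs with hu_def
  set u' : Fin d → ℝ := x' - μs with hu'_def
  set a : ℝ := u ⬝ᵥ (Cs⁻¹ *ᵥ u) with ha_def
  set a' : ℝ := u' ⬝ᵥ (Cs⁻¹ *ᵥ u') with ha'_def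
  set bb : ℝ := u ⬝ᵥ (Cs⁻¹ *ᵥ u') with hbb_def
  set kk : ℝ := ((d : ℝ) + ν) / 2 with hkk_def
  set c : ℝ := (d : ℝ) / 2 + kk with hc_def
  set b0 : ℝ := (ν + (a + a' - 2 * s * bb) / ρ ^ 2) / 2 with hb0_def
  have ha0 : 0 ≤ a := by
    rw [ha_def, hu_def]; simpa using hCs.inv.posSemidef.dotProduct_mulVec_nonneg (x - μs)
  have ha'0 : 0 ≤ a' := by
    rw [ha'_def, hu'_def]; simpa using hCs.inv.posSemidef.dotProduct_mulVec_nonneg (x' - μs)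
  have hνa : 0 < ν + a := by linarith
  have hQ : (u' - s • u) ⬝ᵥ (Cs⁻¹ *ᵥ (u' - s • u))
      = a' - 2 * s * bb + s ^ 2 * a := by
    have hsym : u' ⬝ᵥ (Cs⁻¹ *ᵥ u) = bb := by
      rw [hbb_def]; exact dot_symm hMt _ _
    simp only [Matrix.mulVec_sub, Matrix.mulVec_smul, dotProduct_sub,
      sub_dotProduct, dotProduct_smul, smul_dotProduct, smul_eq_mul]
    rw [hsym, ← ha_def, ← ha'_def, ← hbb_def]
    ring
  have hQ0 : 0 ≤ a' - 2 * s * bb + s ^ 2 * a := by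
    rw [← hQ]; simpa using hCs.inv.posSemidef.dotProduct_mulVec_nonneg (u' - s • u)
  have hkey : a + a' - 2 * s * bb = (a' - 2 * s * bb + s ^ 2 * a) + ρ ^ 2 * a := by
    rw [hs2]; ring
  have hnum : 0 ≤ a + a' - 2 * s * bb := by
    rw [hkey]
    exact add_nonneg hQ0 (mul_nonneg (sq_nonneg ρ) ha0)
  have hb0 : 0 < b0 := by
    rw [hb0_def]
    have : 0 ≤ (a + a' - 2 * s * bb) / ρ ^ 2 := div_nonneg hnum (sq_nonneg ρ)
    linarith
  have hkk : 0 < kk := by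
    rw [hkk_def]
    have : (0 : ℝ) ≤ (d : ℝ) := Nat.cast_nonneg d
    linarith
  have hc : 0 < c := by
    rw [hc_def]
    have : (0 : ℝ) ≤ (d : ℝ) := Nat.cast_nonneg d
    linarith
  set C : ℝ := (Real.sqrt ((2 * Real.pi) ^ d * Cs.det) * ρ ^ d)⁻¹ /
      (Real.Gamma kk * (2 / (ν + a)) ^ kk) with hC_def
  have hInt : ∀ z ∈ Set.Ioi (0 : ℝ),
      gaussPdf d (μs + s • u) ((ρ ^ 2 * z) • Cs) x' * invGammaPdf kk (2 / (ν + a)) z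
        = C * (z ^ (-c - 1) * Real.exp (-(b0 / z))) := by
    intro z hz
    have hz0 : (0 : ℝ) < z := hz
    rw [gaussPdf, invGammaPdf, if_pos hz0]
    have hveq : x' - (μs + s • u) = u' - s • u := by
      rw [hu_def, hu'_def]
      funext i
      simp only [Pi.sub_apply, Pi.add_apply, Pi.smul_apply, smul_eq_mul]
      ring
    haveI : Invertible (ρ ^ 2 * z) := invertibleOfNonzero (by positivity)
    have hdet : ((ρ ^ 2 * z) • Cs).det = (ρ ^ 2 * z) ^ d * Cs.det := by
      simp [Matrix.det_smul]
    have hinv : ((ρ ^ 2 * z) • Cs)⁻¹ = (ρ ^ 2 * z)⁻¹ • Cs⁻¹ := by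
      rw [Matrix.inv_smul Cs (ρ ^ 2 * z) hCs.det_pos.ne'.isUnit, invOf_eq_inv]
    rw [hveq, hdet, hinv, Matrix.smul_mulVec, dotProduct_smul, smul_eq_mul, hQ]
    have hexp : Real.exp (-(1 / 2) * ((ρ ^ 2 * z)⁻¹ * (a' - 2 * s * bb + s ^ 2 * a))) *
        Real.exp (-1 / (2 / (ν + a) * z)) = Real.exp (-(b0 / z)) := by
      rw [← Real.exp_add]
      congr 1
      rw [hb0_def, hs2]
      field_simp
      ring
    have hsq : (Real.sqrt ((2 * Real.pi) ^ d * ((ρ ^ 2 * z) ^ d * Cs.det)))⁻¹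
        = (Real.sqrt ((2 * Real.pi) ^ d * Cs.det) * ρ ^ d)⁻¹ * (z ^ ((d : ℝ) / 2))⁻¹ := by
      have h1 : (2 * Real.pi) ^ d * ((ρ ^ 2 * z) ^ d * Cs.det)
          = ((2 * Real.pi) ^ d * Cs.det) * ((ρ ^ d) ^ 2 * z ^ d) := by ring
      have h2 : Real.sqrt (z ^ d) = z ^ ((d : ℝ) / 2) := by
        rw [Real.sqrt_eq_rpow, ← Real.rpow_natCast z d, ← Real.rpow_mul hz0.le,
          show ((d : ℝ) * (1 / 2)) = (d : ℝ) / 2 by ring]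
      rw [h1, Real.sqrt_mul (mul_nonneg (by positivity) hCs.det_pos.le),
        Real.sqrt_mul (by positivity), Real.sqrt_mul (sq_nonneg (ρ ^ d)),
        Real.sqrt_sq (by positivity), h2]
      ring
    rw [hsq, ← hexp]
    have hzp : z ^ (-c - 1) = (z ^ ((d : ℝ) / 2))⁻¹ * z ^ (-(kk + 1)) := by
      rw [← Real.rpow_neg hz0.le, ← Real.rpow_add hz0]
      congr 1
      rw [hc_def]
      ring
    rw [hzp, hC_def]
    ring
  rw [MeasureTheory.setIntegral_congr_fun measurableSet_Ioi hInt, integral_const_mul,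
    integral_inv_pow_exp hc hb0, hC_def]
  have hθ : (2 / (ν + a)) ^ kk = (((ν + a) / 2) ^ kk)⁻¹ := by
    rw [show (2 : ℝ) / (ν + a) = ((ν + a) / 2)⁻¹ by rw [inv_div],
      Real.inv_rpow (by positivity)]
  rw [hθ]
  have hΓ : Real.Gamma kk ≠ 0 := (Real.Gamma_pos_of_pos hkk).ne'
  have hX : ((ν + a) / 2 : ℝ) ^ kk ≠ 0 := (Real.rpow_pos_of_pos (by positivity) _).ne'
  field_simp

/-- The tpCN proposal transition kernel is reversible with respect to the
multivariate `t`-distribution `t_ν(μ_s, C_s)`. -/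
theorem tpCN_reversible (d : ℕ) (hd : 1 ≤ d) (ν : ℝ) (hν : 0 < ν)
    (μs : Fin d → ℝ) (Cs : Matrix (Fin d) (Fin d) ℝ) (hCs : Cs.PosDef)
    (ρ : ℝ) (hρ : ρ ∈ Set.Ioo (0 : ℝ) 1) :
    ∀ x x' : Fin d → ℝ,
      tPdf d ν μs Cs x * tpcnPdf d ν μs Cs ρ x x' =
        tPdf d ν μs Cs x' * tpcnPdf d ν μs Cs ρ x' x := by
  intro x x'
  have hMt : (Cs⁻¹)ᵀ = Cs⁻¹ := inv_transpose_eq hCs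
  rw [tpcn_eval d ν hν μs Cs hCs ρ hρ x x', tpcn_eval d ν hν μs Cs hCs ρ hρ x' x]
  have hsym : innerS d μs Cs x' x = innerS d μs Cs x x' := by
    simp only [innerS]
    exact dot_symm hMt _ _
  rw [hsym]
  unfold tPdf
  set a : ℝ := innerS d μs Cs x x with ha_def
  set a' : ℝ := innerS d μs Cs x' x' with ha'_def
  set bb : ℝ := innerS d μs Cs x x' with hbb_def
  have ha0 : 0 ≤ a := by
    rw [ha_def]; simp only [innerS]; simpa using hCs.inv.posSemidef.dotProduct_mulVec_nonneg (x - μs)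
  have ha'0 : 0 ≤ a' := by
    rw [ha'_def]; simp only [innerS]; simpa using hCs.inv.posSemidef.dotProduct_mulVec_nonneg (x' - μs)
  have hswap : (ν + (a' + a - 2 * Real.sqrt (1 - ρ ^ 2) * bb) / ρ ^ 2) / 2
      = (ν + (a + a' - 2 * Real.sqrt (1 - ρ ^ 2) * bb) / ρ ^ 2) / 2 := by ring
  rw [hswap]
  have hexp : (ν + (d : ℝ)) / 2 = ((d : ℝ) + ν) / 2 := by ring
  rw [hexp]
  have e1 := cancel_aux (a := a) (kk := ((d : ℝ) + ν) / 2) hν ha0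
  have e2 := cancel_aux (a := a') (kk := ((d : ℝ) + ν) / 2) hν ha'0
  set T : ℝ := Real.Gamma (((d : ℝ) + ν) / 2) /
      (Real.Gamma (ν / 2) * (ν * Real.pi) ^ ((d : ℝ) / 2) * Real.sqrt Cs.det) with hT_def
  set CC : ℝ := (Real.sqrt ((2 * Real.pi) ^ d * Cs.det) * ρ ^ d)⁻¹ *
      (Real.Gamma ((d : ℝ) / 2 + ((d : ℝ) + ν) / 2) / Real.Gamma (((d : ℝ) + ν) / 2)) with hCC_def
  set S2 : ℝ := ((ν + (a + a' - 2 * Real.sqrt (1 - ρ ^ 2) * bb) / ρ ^ 2) / 2)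
      ^ (-((d : ℝ) / 2 + ((d : ℝ) + ν) / 2)) with hS2_def
  calc T * (1 + a / ν) ^ (-(((d : ℝ) + ν) / 2)) *
        (CC * (((ν + a) / 2) ^ (((d : ℝ) + ν) / 2) * S2))
      = T * CC * S2 * ((1 + a / ν) ^ (-(((d : ℝ) + ν) / 2)) *
          ((ν + a) / 2) ^ (((d : ℝ) + ν) / 2)) := by ring
    _ = T * CC * S2 * ((1 + a' / ν) ^ (-(((d : ℝ) + ν) / 2)) *
          ((ν + a') / 2) ^ (((d : ℝ) + ν) / 2)) := by rw [e1, e2]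
    _ = T * (1 + a' / ν) ^ (-(((d : ℝ) + ν) / 2)) *
        (CC * (((ν + a') / 2) ^ (((d : ℝ) + ν) / 2) * S2)) := by ring
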